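/- Let (x_n) be strictly increasing reals with x_{n+1} - x_n ≥ c > 0, and suppose E*_N := #{(n₁,n₂,n₃,n₄) ∈ [1,N]⁴ : |x_{n₁}-x_{n₂}+x_{n₃}-x_{n₄}| < 1} ≤ A. Then ∑_{1≤n₁<n₂≤N, x_{n₂}-x_{n₁}≥1} (x_{n₂}-x_{n₁})^{-1/2} ≪ (log(2N)) · A^{1/2}, with an absolute implied constant. -/

import Mathlib

open Finset

/-- Approximate additive energy: the number of quadruples `(n₁,n₂,n₃,n₄) ∈ [1,N]⁴`
with `|x_{n₁} - x_{n₂} + x_{n₃} - x_{n₄}| < 1`. -/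
noncomputable def Estar (x : ℕ → ℝ) (N : ℕ) : ℕ :=
  ((Finset.Icc 1 N ×ˢ Finset.Icc 1 N ×ˢ Finset.Icc 1 N ×ˢ Finset.Icc 1 N).filter
    (fun t => |x t.1 - x t.2.1 + x t.2.2.1 - x t.2.2.2| < 1)).card

/-- A sum of reciprocals of `n` distinct positive integers is at most the `n`-th
harmonic number. -/
lemma sum_inv_le_harmonic : ∀ (n : ℕ) (K : Finset ℕ), K.card = n → (∀ j ∈ K, 1 ≤ j) →
    ∑ j ∈ K, (1 : ℝ) / j ≤ ∑ i ∈ Finset.range n, (1 : ℝ) / (i + 1) := by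
  intro n
  induction n with
  | zero => intro K hc _; rw [Finset.card_eq_zero.mp hc]; simp
  | succ n ih =>
    intro K hc h1
    have hne : K.Nonempty := Finset.card_pos.mp (by omega)
    set m := K.max' hne with hm
    have hmK : m ∈ K := K.max'_mem hne
    have hKsub : K ⊆ Finset.Icc 1 m := by
      intro j hj; rw [Finset.mem_Icc]; exact ⟨h1 j hj, K.le_max' j hj⟩
    have hcard : n + 1 ≤ m := by
      have := Finset.card_le_card hKsub
      simpa [Nat.card_Icc, hc] using this
    have herase : (K.erase m).card = n := by
      rw [Finset.card_erase_of_mem hmK, hc]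
      omega

    have h1' : ∀ j ∈ K.erase m, 1 ≤ j := fun j hj => h1 j (Finset.mem_of_mem_erase hj)
    have hih := ih (K.erase m) herase h1'
    rw [← Finset.insert_erase hmK, Finset.sum_insert (Finset.notMem_erase m K),
      Finset.sum_range_succ]
    have h1m : (1 : ℝ) / m ≤ 1 / (n + 1) := by
      apply one_div_le_one_div_of_le (by positivity)
      exact_mod_cast hcard
    linarith

theorem stmt16 :
    ∃ C > (0 : ℝ), ∀ (x : ℕ → ℝ) (c : ℝ), 0 < c → StrictMono x →
      (∀ n, c ≤ x (n + 1) - x n) → ∀ (N : ℕ) (A : ℝ), 1 ≤ N →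
      (Estar x N : ℝ) ≤ A →
      (∑ n₁ ∈ Finset.Icc 1 N, ∑ n₂ ∈ Finset.Icc 1 N,
          if n₁ < n₂ ∧ 1 ≤ x n₂ - x n₁ then (x n₂ - x n₁) ^ (-(1 : ℝ) / 2) else 0)
        ≤ C * Real.log (2 * N) * Real.sqrt A := by
  classical
  refine ⟨3, by norm_num, ?_⟩
  intro x c hc hmono hgap N A hN hE
  set L := Real.log (2 * N) with hL
  have hL2 : Real.log 2 ≤ L := by
    apply Real.log_le_log (by norm_num)
    have : (1 : ℝ) ≤ (N : ℝ) := by exact_mod_cast hN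
    linarith
  have hlog2 : (0.6931471803 : ℝ) < Real.log 2 := Real.log_two_gt_d9
  have hLpos : 0 < L := lt_of_lt_of_le (by linarith) hL2
  have hA0 : 0 ≤ A := le_trans (by positivity) hE
  set I := Finset.Icc 1 N with hI
  set P := (I ×ˢ I).filter (fun p => p.1 < p.2 ∧ 1 ≤ x p.2 - x p.1) with hP
  set k : ℕ × ℕ → ℕ := fun p => ⌊x p.2 - x p.1⌋₊ with hk
  set K := P.image k with hK
  set r : ℕ → ℕ := fun j => (P.filter (fun p => k p = j)).card with hr
  have hd1 : ∀ p ∈ P, 1 ≤ x p.2 - x p.1 := by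
    intro p hp; exact ((Finset.mem_filter.mp hp).2).2
  have hk1 : ∀ p ∈ P, 1 ≤ k p := by
    intro p hp
    exact Nat.le_floor (by exact_mod_cast hd1 p hp)
  have hK1 : ∀ j ∈ K, 1 ≤ j := by
    intro j hj
    obtain ⟨p, hp, rfl⟩ := Finset.mem_image.mp hj
    exact hk1 p hp
  -- Step 0: rewrite the LHS as a sum over P
  have hLHS : (∑ n₁ ∈ Finset.Icc 1 N, ∑ n₂ ∈ Finset.Icc 1 N,
      if n₁ < n₂ ∧ 1 ≤ x n₂ - x n₁ then (x n₂ - x n₁) ^ (-(1 : ℝ) / 2) else 0)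
      = ∑ p ∈ P, (x p.2 - x p.1) ^ (-(1 : ℝ) / 2) := by
    rw [hP, Finset.sum_filter, Finset.sum_product]
  -- Step 1: compare with floors
  have step1 : ∑ p ∈ P, (x p.2 - x p.1) ^ (-(1 : ℝ) / 2)
      ≤ ∑ p ∈ P, (k p : ℝ) ^ (-(1 : ℝ) / 2) := by
    apply Finset.sum_le_sum
    intro p hp
    have h1 : (1 : ℝ) ≤ (k p : ℝ) := by exact_mod_cast hk1 p hp
    have h2 : (k p : ℝ) ≤ x p.2 - x p.1 := Nat.floor_le (by linarith [hd1 p hp])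
    exact Real.rpow_le_rpow_of_nonpos (by linarith) h2 (by norm_num)
  -- Step 2: fiberwise decomposition
  have step2 : ∑ p ∈ P, (k p : ℝ) ^ (-(1 : ℝ) / 2)
      = ∑ j ∈ K, (r j : ℝ) * (j : ℝ) ^ (-(1 : ℝ) / 2) := by
    rw [← Finset.sum_fiberwise_of_maps_to' (fun p hp => Finset.mem_image_of_mem k hp)
      (fun j => (j : ℝ) ^ (-(1 : ℝ) / 2))]
    apply Finset.sum_congr rfl
    intro j _
    rw [Finset.sum_const, nsmul_eq_mul]
  -- Step 3: Cauchy–Schwarz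
  have step3 : ∑ j ∈ K, (r j : ℝ) * (j : ℝ) ^ (-(1 : ℝ) / 2)
      ≤ Real.sqrt (∑ j ∈ K, ((r j : ℝ)) ^ 2) *
        Real.sqrt (∑ j ∈ K, ((j : ℝ) ^ (-(1 : ℝ) / 2)) ^ 2) :=
    Real.sum_mul_le_sqrt_mul_sqrt K _ _
  -- Energy bound: ∑ r j ^ 2 ≤ Estar
  have energy : ∑ j ∈ K, ((r j : ℝ)) ^ 2 ≤ A := by
    have hU : ∑ j ∈ K, r j * r j =
        (K.biUnion (fun j => (P.filter (fun p => k p = j)) ×ˢ (P.filter (fun p => k p = j)))).card := by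
      rw [Finset.card_biUnion]
      · apply Finset.sum_congr rfl
        intro j _
        rw [Finset.card_product]
      · intro j _ j' _ hjj'
        simp only [Finset.disjoint_left]
        intro a ha ha'
        rw [Finset.mem_product, Finset.mem_filter] at ha ha'
        exact hjj' (ha.1.2.symm.trans ha'.1.2)
    have hinj : (K.biUnion (fun j => (P.filter (fun p => k p = j)) ×ˢ (P.filter (fun p => k p = j)))).card
        ≤ Estar x N := by
      apply Finset.card_le_card_of_injOn
        (fun pq => (pq.1.2, pq.1.1, pq.2.1, pq.2.2))
      · intro pq hpq
        rw [Finset.mem_coe, Finset.mem_biUnion] at hpq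
        obtain ⟨j, _, hmem⟩ := hpq
        rw [Finset.mem_product] at hmem
        obtain ⟨hm1, hm2⟩ := hmem
        rw [Finset.mem_filter] at hm1 hm2
        obtain ⟨hp1, hkp1⟩ := hm1
        obtain ⟨hp2, hkp2⟩ := hm2
        have hp1' := (Finset.mem_filter.mp hp1).1
        have hp2' := (Finset.mem_filter.mp hp2).1
        rw [Finset.mem_product] at hp1' hp2'
        rw [Finset.mem_coe, Finset.mem_filter]
        constructor
        · rw [Finset.mem_product, Finset.mem_product, Finset.mem_product]
          exact ⟨hp1'.2, hp1'.1, hp2'.1, hp2'.2⟩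
        · have hd1' : 1 ≤ x pq.1.2 - x pq.1.1 := hd1 _ hp1
          have hd2' : 1 ≤ x pq.2.2 - x pq.2.1 := hd1 _ hp2
          have hfl1 : (j : ℝ) ≤ x pq.1.2 - x pq.1.1 := by
            rw [← hkp1]; exact Nat.floor_le (by linarith)
          have hfl1' : x pq.1.2 - x pq.1.1 < j + 1 := by
            rw [← hkp1]; exact Nat.lt_floor_add_one _
          have hfl2 : (j : ℝ) ≤ x pq.2.2 - x pq.2.1 := by
            rw [← hkp2]; exact Nat.floor_le (by linarith)
          have hfl2' : x pq.2.2 - x pq.2.1 < j + 1 := by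
            rw [← hkp2]; exact Nat.lt_floor_add_one _
          rw [abs_lt]
          constructor <;> simp only <;> linarith
      · intro a _ b _ hab
        simp only [Prod.mk.injEq] at hab
        obtain ⟨h1, h2, h3, h4⟩ := hab
        exact Prod.ext (Prod.ext h2 h1) (Prod.ext h3 h4)
        
    have hle : ((∑ j ∈ K, r j * r j : ℕ) : ℝ) ≤ A := by
      rw [hU]
      exact le_trans (by exact_mod_cast hinj) hE
    calc ∑ j ∈ K, ((r j : ℝ)) ^ 2 = ((∑ j ∈ K, r j * r j : ℕ) : ℝ) := by
          push_cast; apply Finset.sum_congr rfl; intro j _; ring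
      _ ≤ A := hle
  -- Harmonic bound: ∑_{j ∈ K} 1/j ≤ 4 log (2N)
  have harm : ∑ j ∈ K, ((j : ℝ) ^ (-(1 : ℝ) / 2)) ^ 2 ≤ 4 * L := by
    have heq : ∀ j ∈ K, ((j : ℝ) ^ (-(1 : ℝ) / 2)) ^ 2 = 1 / (j : ℝ) := by
      intro j hj
      have hj0 : (0 : ℝ) ≤ (j : ℝ) := Nat.cast_nonneg j
      rw [← Real.rpow_natCast ((j : ℝ) ^ (-(1 : ℝ) / 2)) 2, ← Real.rpow_mul hj0]
      have h2 : (-(1 : ℝ) / 2) * (2 : ℕ) = -1 := by norm_num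
      rw [h2, Real.rpow_neg_one, one_div]
    rw [Finset.sum_congr rfl heq]
    have hcard : K.card ≤ N ^ 2 := by
      calc K.card ≤ P.card := Finset.card_image_le
        _ ≤ (I ×ˢ I).card := Finset.card_le_card (Finset.filter_subset _ _)
        _ = N ^ 2 := by rw [Finset.card_product]; simp [hI, Nat.card_Icc, sq]
    have h1 := sum_inv_le_harmonic K.card K rfl hK1
    have h2 : ∑ i ∈ Finset.range K.card, (1 : ℝ) / (i + 1)
        ≤ ∑ i ∈ Finset.range (N ^ 2), (1 : ℝ) / (i + 1) := by
      apply Finset.sum_le_sum_of_subset_of_nonneg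
        (Finset.range_subset_range.mpr hcard)
      intro i _ _; positivity
    have h3 : ∑ i ∈ Finset.range (N ^ 2), (1 : ℝ) / (i + 1) ≤ 1 + Real.log ((N : ℝ) ^ 2) := by
      have := harmonic_le_one_add_log (N ^ 2)
      push_cast at this
      have hcast : ((harmonic (N ^ 2) : ℚ) : ℝ) = ∑ i ∈ Finset.range (N ^ 2), (1 : ℝ) / (i + 1) := by
        unfold harmonic
        push_cast
        apply Finset.sum_congr rfl
        intro i _
        rw [one_div]
      rw [← hcast]
      exact this
    have h4 : Real.log ((N : ℝ) ^ 2) = 2 * Real.log N := by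
      rw [Real.log_pow]; push_cast; ring
    have h5 : Real.log N ≤ L := by
      rcases Nat.eq_zero_or_pos N with h | h
      · omega
      · apply Real.log_le_log (by exact_mod_cast h)
        have : (1 : ℝ) ≤ (N : ℝ) := by exact_mod_cast hN
        linarith
    have h6 : (1 : ℝ) ≤ 2 * L := by linarith
    have : Real.log ((N : ℝ) ^ 2) ≤ 2 * L := by rw [h4]; linarith
    linarith
  -- Put it all together
  have hsq1 : Real.sqrt (∑ j ∈ K, ((r j : ℝ)) ^ 2) ≤ Real.sqrt A :=
    Real.sqrt_le_sqrt energy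
  have hsq2 : Real.sqrt (∑ j ∈ K, ((j : ℝ) ^ (-(1 : ℝ) / 2)) ^ 2) ≤ Real.sqrt (4 * L) :=
    Real.sqrt_le_sqrt harm
  have hfinal : Real.sqrt (4 * L) ≤ 3 * L := by
    rw [show (4 : ℝ) * L = (2 * Real.sqrt L) ^ 2 by
      rw [mul_pow, Real.sq_sqrt hLpos.le]; ring]
    rw [Real.sqrt_sq (by positivity)]
    nlinarith [Real.sq_sqrt hLpos.le, Real.sqrt_nonneg L]
  have hnn1 : (0 : ℝ) ≤ Real.sqrt (∑ j ∈ K, ((r j : ℝ)) ^ 2) := Real.sqrt_nonneg _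
  have hnn2 : (0 : ℝ) ≤ Real.sqrt A := Real.sqrt_nonneg _
  calc (∑ n₁ ∈ Finset.Icc 1 N, ∑ n₂ ∈ Finset.Icc 1 N,
      if n₁ < n₂ ∧ 1 ≤ x n₂ - x n₁ then (x n₂ - x n₁) ^ (-(1 : ℝ) / 2) else 0)
      = ∑ p ∈ P, (x p.2 - x p.1) ^ (-(1 : ℝ) / 2) := hLHS
    _ ≤ ∑ p ∈ P, (k p : ℝ) ^ (-(1 : ℝ) / 2) := step1
    _ = ∑ j ∈ K, (r j : ℝ) * (j : ℝ) ^ (-(1 : ℝ) / 2) := step2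
    _ ≤ Real.sqrt (∑ j ∈ K, ((r j : ℝ)) ^ 2) *
        Real.sqrt (∑ j ∈ K, ((j : ℝ) ^ (-(1 : ℝ) / 2)) ^ 2) := step3
    _ ≤ Real.sqrt A * Real.sqrt (4 * L) := by
        apply mul_le_mul hsq1 hsq2 (Real.sqrt_nonneg _) hnn2
    _ ≤ Real.sqrt A * (3 * L) := by
        apply mul_le_mul_of_nonneg_left hfinal hnn2
    _ = 3 * L * Real.sqrt A := by ring
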